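/- Let X ⊂ ℝ^{2n} be a centrally symmetric convex body. Then vol(P ⋉_ω X) = (4n+3)/((n+1)(2n+1)) · vol(X), where P ⋉_ω X = {(v,x) ∈ P × ℝ^{2n} : |ω₂(u,v)| + ‖x‖_X ≤ 1} ⊂ ℝ^{2n+2}, P = conv{±(1,1),±(1,0),±(0,1)}, u = (1,1). -/

import Mathlib

open Set

/-- The standard symplectic form on ℝ^{2n} = (Fin n → ℝ) × (Fin n → ℝ). -/
noncomputable def symForm (n : ℕ) (x y : (Fin n → ℝ) × (Fin n → ℝ)) : ℝ :=
  ∑ i, (x.1 i * y.2 i - x.2 i * y.1 i)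

/-- The symplectic polar of a set in ℝ^{2n}. -/
def sPolar (n : ℕ) (X : Set ((Fin n → ℝ) × (Fin n → ℝ))) : Set ((Fin n → ℝ) × (Fin n → ℝ)) :=
  {y | ∀ x ∈ X, symForm n x y ≤ 1}

/-- The standard area (symplectic) form on ℝ². -/
noncomputable def omega2 (v w : ℝ × ℝ) : ℝ := v.1 * w.2 - v.2 * w.1

/-- The hexagon P = conv{±(1,1), ±(1,0), ±(0,1)}. -/
noncomputable def hexP : Set (ℝ × ℝ) :=
  convexHull ℝ {(1,1), (1,0), (0,1), (-1,-1), (-1,0), (0,-1)}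

/-- ℝ^{2n+2} = ℝ² × ℝ^{2n}. -/
abbrev Amb (n : ℕ) := (ℝ × ℝ) × ((Fin n → ℝ) × (Fin n → ℝ))

/-- The direct-sum symplectic form on ℝ² × ℝ^{2n}. -/
noncomputable def symFormS (n : ℕ) (p q : Amb n) : ℝ :=
  omega2 p.1 q.1 + symForm n p.2 q.2

/-- The symplectic polar of a set in ℝ² × ℝ^{2n}. -/
def sPolarS (n : ℕ) (S : Set (Amb n)) : Set (Amb n) :=
  {q | ∀ p ∈ S, symFormS n p q ≤ 1}

/-- The symplectic P-suspension of a centrally symmetric convex body X ⊂ ℝ^{2n}. -/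
noncomputable def susp (n : ℕ) (X : Set ((Fin n → ℝ) × (Fin n → ℝ))) : Set (Amb n) :=
  {p | p.1 ∈ hexP ∧ |omega2 (1,1) p.1| + gauge X p.2 ≤ 1}

open Set MeasureTheory ENNReal Pointwise intervalIntegral

def S2 : Set (ℝ × ℝ) := {v | |v.1| ≤ 1 ∧ |v.2| ≤ 1 ∧ |v.2 - v.1| ≤ 1}

lemma convex_S2 : Convex ℝ S2 := by
  intro v hv w hw a b ha hb hab
  obtain ⟨h1, h2, h3⟩ := hv
  obtain ⟨k1, k2, k3⟩ := hw
  have key : ∀ x y : ℝ, |x| ≤ 1 → |y| ≤ 1 → |a*x + b*y| ≤ 1 := by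
    intro x y hx hy
    calc |a*x + b*y| ≤ |a*x| + |b*y| := abs_add_le _ _
      _ = a*|x| + b*|y| := by rw [abs_mul, abs_mul, abs_of_nonneg ha, abs_of_nonneg hb]
      _ ≤ a*1 + b*1 := by gcongr
      _ = 1 := by linarith
  refine ⟨?_, ?_, ?_⟩
  · simpa using key _ _ h1 k1
  · simpa using key _ _ h2 k2
  · have : (a • v + b • w).2 - (a • v + b • w).1 = a*(v.2-v.1) + b*(w.2-w.1) := by
      simp [Prod.smul_def, smul_eq_mul]; ring
    rw [this]; exact key _ _ h3 k3

lemma zero_mem_hexP : (0 : ℝ × ℝ) ∈ hexP := by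
  have h1 : ((1,1) : ℝ×ℝ) ∈ hexP := subset_convexHull ℝ _ (by simp)
  have h2 : ((-1,-1) : ℝ×ℝ) ∈ hexP := subset_convexHull ℝ _ (by norm_num [Prod.ext_iff])
  have := (convex_convexHull ℝ _) h1 h2 (by norm_num : (0:ℝ) ≤ 1/2) (by norm_num : (0:ℝ) ≤ 1/2) (by norm_num)
  have e : (1/2:ℝ) • ((1,1) : ℝ×ℝ) + (1/2:ℝ) • ((-1,-1) : ℝ×ℝ) = 0 := by ext <;> norm_num
  rw [e] at this; exact this

lemma combo_mem_hexP {g1 g2 : ℝ × ℝ} (hg1 : g1 ∈ hexP) (hg2 : g2 ∈ hexP)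
    {a b : ℝ} (ha : 0 ≤ a) (hb : 0 ≤ b) (hab : a + b ≤ 1) :
    a • g1 + b • g2 ∈ hexP := by
  have hc : Convex ℝ hexP := convex_convexHull ℝ _
  rcases eq_or_lt_of_le (add_nonneg ha hb) with h | h
  · have ha0 : a = 0 := by linarith [ha, hb]
    have hb0 : b = 0 := by linarith
    simpa [ha0, hb0] using zero_mem_hexP
  · have hm : (a/(a+b)) • g1 + (b/(a+b)) • g2 ∈ hexP :=
      hc hg1 hg2 (by positivity) (by positivity) (by rw [← add_div, div_self (ne_of_gt h)])
    have := hc hm zero_mem_hexP (le_of_lt h) (by linarith : (0:ℝ) ≤ 1-(a+b)) (by ring)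
    have e : (a+b) • ((a/(a+b)) • g1 + (b/(a+b)) • g2) + (1-(a+b)) • (0:ℝ×ℝ)
        = a • g1 + b • g2 := by
      rw [smul_add, smul_smul, smul_smul, smul_zero, add_zero,
        mul_div_cancel₀ _ (ne_of_gt h), mul_div_cancel₀ _ (ne_of_gt h)]
    rwa [e] at this

lemma hexP_eq : hexP = S2 := by
  apply le_antisymm
  · apply convexHull_min _ convex_S2
    intro p hp
    simp only [mem_insert_iff, mem_singleton_iff] at hp
    rcases hp with h|h|h|h|h|h <;> subst h <;>
      exact ⟨by norm_num, by norm_num, by norm_num⟩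
  · rintro ⟨x, y⟩ ⟨h1, h2, h3⟩
    simp only [abs_le] at h1 h2 h3
    have m11 : ((1,1) : ℝ×ℝ) ∈ hexP := subset_convexHull ℝ _ (by simp)
    have m10 : ((1,0) : ℝ×ℝ) ∈ hexP := subset_convexHull ℝ _ (by norm_num [Prod.ext_iff])
    have m01 : ((0,1) : ℝ×ℝ) ∈ hexP := subset_convexHull ℝ _ (by norm_num [Prod.ext_iff])
    have mn11 : ((-1,-1) : ℝ×ℝ) ∈ hexP := subset_convexHull ℝ _ (by norm_num [Prod.ext_iff])
    have mn10 : ((-1,0) : ℝ×ℝ) ∈ hexP := subset_convexHull ℝ _ (by norm_num [Prod.ext_iff])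
    have m0n1 : ((0,-1) : ℝ×ℝ) ∈ hexP := subset_convexHull ℝ _ (by norm_num [Prod.ext_iff])
    rcases le_or_gt 0 x with hx | hx <;> rcases le_or_gt 0 y with hy | hy
    · rcases le_or_gt x y with hxy | hxy
      · have := combo_mem_hexP m11 m01 hx (by linarith : (0:ℝ) ≤ y - x) (by linarith)
        convert this using 1
        refine Prod.ext ?_ ?_ <;> simp <;> ring
      · have := combo_mem_hexP m11 m10 hy (by linarith : (0:ℝ) ≤ x - y) (by linarith)
        convert this using 1
        refine Prod.ext ?_ ?_ <;> simp <;> ring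
    · have := combo_mem_hexP m10 m0n1 hx (by linarith : (0:ℝ) ≤ -y) (by linarith)
      convert this using 1
      refine Prod.ext ?_ ?_ <;> simp <;> ring
    · have := combo_mem_hexP mn10 m01 (by linarith : (0:ℝ) ≤ -x) hy (by linarith)
      convert this using 1
      refine Prod.ext ?_ ?_ <;> simp <;> ring
    · rcases le_or_gt x y with hxy | hxy
      · have := combo_mem_hexP mn11 mn10 (by linarith : (0:ℝ) ≤ -y) (by linarith : (0:ℝ) ≤ y - x) (by linarith)
        convert this using 1
        refine Prod.ext ?_ ?_ <;> simp <;> ring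
      · have := combo_mem_hexP mn11 m0n1 (by linarith : (0:ℝ) ≤ -x) (by linarith : (0:ℝ) ≤ x - y) (by linarith)
        convert this using 1
        refine Prod.ext ?_ ?_ <;> simp <;> ring

lemma isClosed_S2 : IsClosed S2 := by
  have h1 : IsClosed {v : ℝ×ℝ | |v.1| ≤ 1} :=
    isClosed_le (by fun_prop) continuous_const
  have h2 : IsClosed {v : ℝ×ℝ | |v.2| ≤ 1} :=
    isClosed_le (by fun_prop) continuous_const
  have h3 : IsClosed {v : ℝ×ℝ | |v.2 - v.1| ≤ 1} :=
    isClosed_le (by fun_prop) continuous_const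
  exact (h1.inter (h2.inter h3))

lemma contphi (n : ℕ) : Continuous (fun s : ℝ => (1-|s|)^(2*n) * (2-|s|)) := by
  fun_prop

lemma int01 (n : ℕ) : ∫ s in (0:ℝ)..1, (1-|s|)^(2*n) * (2-|s|)
    = 1/(2*n+1) + 1/(2*n+2) := by
  have h1 : ∫ s in (0:ℝ)..1, (1-|s|)^(2*n) * (2-|s|)
      = ∫ s in (0:ℝ)..1, ((1-s)^(2*n) + (1-s)^(2*n+1)) := by
    apply integral_congr
    intro s hs
    rw [uIcc_of_le (by norm_num : (0:ℝ) ≤ 1)] at hs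
    simp only []
    rw [abs_of_nonneg hs.1]
    ring
  rw [h1, intervalIntegral.integral_add]
  · have e : ∀ k : ℕ, ∫ s in (0:ℝ)..1, (1-s)^k = 1/(k+1) := by
      intro k
      have := intervalIntegral.integral_comp_sub_left (a := (0:ℝ)) (b := 1) (fun x => x ^ k) 1
      simp only [sub_zero, sub_self] at this
      rw [this, integral_pow]
      simp
    rw [e (2*n), e (2*n+1)]
    push_cast; ring
  · apply Continuous.intervalIntegrable; fun_prop
  · apply Continuous.intervalIntegrable; fun_prop

lemma key_integral (n : ℕ) : ∫ s in (-1:ℝ)..1, (1-|s|)^(2*n) * (2-|s|)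
    = (4*n+3)/((n+1)*(2*n+1)) := by
  have hsplit : ∫ s in (-1:ℝ)..1, (1-|s|)^(2*n) * (2-|s|)
      = (∫ s in (-1:ℝ)..0, (1-|s|)^(2*n) * (2-|s|))
      + ∫ s in (0:ℝ)..1, (1-|s|)^(2*n) * (2-|s|) := by
    rw [integral_add_adjacent_intervals] <;>
      · apply Continuous.intervalIntegrable; fun_prop
  have hneg : ∫ s in (-1:ℝ)..0, (1-|s|)^(2*n) * (2-|s|)
      = ∫ s in (0:ℝ)..1, (1-|s|)^(2*n) * (2-|s|) := by
    have := intervalIntegral.integral_comp_neg (a := (0:ℝ)) (b := 1)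
      (fun s => (1-|s|)^(2*n) * (2-|s|))
    simp only [abs_neg, neg_zero] at this
    rw [← this]
  rw [hsplit, hneg, int01]
  have hn1 : (0:ℝ) < 2*n+1 := by positivity
  have hn2 : (0:ℝ) < 2*n+2 := by positivity
  field_simp
  ring

lemma gauge_slice {n : ℕ} {X : Set ((Fin n → ℝ) × (Fin n → ℝ))}
    (hconv : Convex ℝ X) (hcomp : IsCompact X)
    (h0 : (0 : (Fin n → ℝ) × (Fin n → ℝ)) ∈ interior X) {t : ℝ} (ht : 0 < t) :
    {x | gauge X x ≤ t} = t • X := by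
  have hXnhds : X ∈ nhds 0 := mem_interior_iff_mem_nhds.1 h0
  have hmem : ∀ y, gauge X y ≤ 1 ↔ y ∈ X := fun y => by
    rw [gauge_le_one_iff_mem_closure hconv hXnhds, hcomp.isClosed.closure_eq]
  ext x
  rw [mem_smul_set_iff_inv_smul_mem₀ (ne_of_gt ht), ← hmem,
    gauge_smul_of_nonneg (inv_nonneg.2 ht.le), smul_eq_mul, mem_setOf_eq,
    inv_mul_le_iff₀ ht, mul_one]

lemma line_measure_zero (c : ℝ) : volume {v : ℝ × ℝ | v.2 - v.1 = c} = 0 := by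
  have hm : MeasurableSet {v : ℝ × ℝ | v.2 - v.1 = c} := by
    have : Continuous fun v : ℝ × ℝ => v.2 - v.1 := by fun_prop
    exact (isClosed_eq this continuous_const).measurableSet
  rw [Measure.volume_eq_prod, Measure.prod_apply hm]
  have : ∀ x : ℝ, (Prod.mk x ⁻¹' {v : ℝ × ℝ | v.2 - v.1 = c}) = {c + x} := by
    intro x; ext y; simp [sub_eq_iff_eq_add]
  simp [this]

lemma lintegral_g (n : ℕ) :
    ∫⁻ v : ℝ × ℝ, S2.indicator (fun v => ENNReal.ofReal ((1-|v.2-v.1|)^(2*n))) v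
      = ENNReal.ofReal ((4*n+3)/((n+1)*(2*n+1))) := by
  set g : ℝ × ℝ → ℝ≥0∞ := S2.indicator (fun v => ENNReal.ofReal ((1-|v.2-v.1|)^(2*n))) with hg
  have hgm : Measurable g := by
    apply Measurable.indicator _ isClosed_S2.measurableSet
    exact ENNReal.measurable_ofReal.comp (by fun_prop)
  rw [Measure.volume_eq_prod, lintegral_prod _ hgm.aemeasurable]
  -- inner translation
  have htrans : ∀ x : ℝ, ∫⁻ y, g (x, y) = ∫⁻ s, g (x, x + s) := by
    intro x
    exact (lintegral_add_left_eq_self (fun s => g (x, s)) x).symm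
  simp_rw [htrans]
  -- swap
  rw [lintegral_lintegral_swap]
  swap
  · exact (hgm.comp (by fun_prop : Measurable (fun z : ℝ×ℝ => (z.1, z.1 + z.2)))).aemeasurable
  -- inner integral over x
  have hxint : ∀ s : ℝ, ∫⁻ x, g (x, x + s)
      = (Icc (-1:ℝ) 1).indicator (fun s => ENNReal.ofReal ((1-|s|)^(2*n) * (2-|s|))) s := by
    intro s
    by_cases hs : |s| ≤ 1
    · have hmem : ∀ x : ℝ, (x, x + s) ∈ S2 ↔ x ∈ Icc (max (-1) (-1-s)) (min 1 (1-s)) := by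
        intro x
        simp only [S2, mem_setOf_eq, add_sub_cancel_left, mem_Icc, le_min_iff, max_le_iff,
          abs_le]
        constructor
        · rintro ⟨⟨a,b⟩,⟨c,d⟩,-⟩
          exact ⟨⟨a, by linarith⟩, b, by linarith⟩
        · rintro ⟨⟨a,b⟩,c,d⟩
          exact ⟨⟨a,c⟩,⟨by linarith, by linarith⟩, abs_le.1 hs⟩
      have : ∀ x : ℝ, g (x, x + s)
          = (Icc (max (-1:ℝ) (-1-s)) (min 1 (1-s))).indicator
              (fun _ => ENNReal.ofReal ((1-|s|)^(2*n))) x := by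
        intro x
        rw [hg]
        by_cases hx : (x, x+s) ∈ S2
        · rw [indicator_of_mem hx, indicator_of_mem ((hmem x).1 hx)]
          simp [add_sub_cancel_left]
        · rw [indicator_of_notMem hx, indicator_of_notMem (fun h => hx ((hmem x).2 h))]
      simp_rw [this]
      rw [lintegral_indicator measurableSet_Icc, setLIntegral_const, Real.volume_Icc]
      rw [indicator_of_mem (mem_Icc.2 (abs_le.1 hs))]
      rw [ENNReal.ofReal_mul (Even.pow_nonneg (even_two_mul n) _)]
      congr 1
      rw [abs_le] at hs
      rcases le_or_gt 0 s with h0 | h0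
      · rw [abs_of_nonneg h0, max_eq_left (by linarith), min_eq_right (by linarith)]
        congr 1; ring
      · rw [abs_of_neg h0, max_eq_right (by linarith), min_eq_left (by linarith)]
        congr 1; ring
    · have : ∀ x : ℝ, g (x, x + s) = 0 := by
        intro x
        apply indicator_of_notMem
        intro h
        exact hs (by simpa [add_sub_cancel_left] using h.2.2)
      simp_rw [this]
      rw [lintegral_zero, indicator_of_notMem (by simpa [abs_le] using hs)]
  simp_rw [hxint]
  rw [lintegral_indicator measurableSet_Icc]
  rw [← ofReal_integral_eq_lintegral_ofReal]
  · rw [integral_Icc_eq_integral_Ioc, ← intervalIntegral.integral_of_le (by norm_num : (-1:ℝ) ≤ 1),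
      key_integral]
  · exact (Continuous.integrableOn_Icc (by fun_prop))
  · apply (ae_restrict_iff' measurableSet_Icc).2
    apply ae_of_all
    intro s hs
    have h1 : (0:ℝ) ≤ (1-|s|)^(2*n) := Even.pow_nonneg (even_two_mul n) _
    have h2 : |s| ≤ 1 := abs_le.2 ⟨hs.1, hs.2⟩
    have : (0:ℝ) ≤ 2 - |s| := by linarith
    positivity

open MeasureTheory in
theorem stmt7 (n : ℕ) (X : Set ((Fin n → ℝ) × (Fin n → ℝ)))
    (hconv : Convex ℝ X) (hcomp : IsCompact X) (hsym : ∀ x ∈ X, -x ∈ X)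
    (h0 : (0 : (Fin n → ℝ) × (Fin n → ℝ)) ∈ interior X) :
    volume (susp n X) =
      ENNReal.ofReal ((4 * n + 3) / ((n + 1) * (2 * n + 1))) * volume X := by
  haveI hHaar : (volume : Measure ((Fin n → ℝ) × (Fin n → ℝ))).IsAddHaarMeasure := by
    rw [Measure.volume_eq_prod]; exact Measure.prod.instIsAddHaarMeasure _ _
  have hXnhds : X ∈ nhds 0 := mem_interior_iff_mem_nhds.1 h0
  -- measurability of susp
  have hsusp_meas : MeasurableSet (susp n X) := by
    have hcl : IsClosed (susp n X) := by
      have h1 : IsClosed {p : Amb n | p.1 ∈ hexP} := by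
        apply IsClosed.preimage continuous_fst
        rw [hexP_eq]; exact isClosed_S2
      have h2 : IsClosed {p : Amb n | |omega2 (1,1) p.1| + gauge X p.2 ≤ 1} := by
        apply isClosed_le _ continuous_const
        apply Continuous.add
        · apply Continuous.abs
          unfold omega2
          fun_prop
        · exact (continuous_gauge hconv hXnhds).comp continuous_snd
      exact h1.inter h2
    exact hcl.measurableSet
  rw [Measure.volume_eq_prod, Measure.prod_apply hsusp_meas]
  -- a.e. slice identity
  set g : ℝ × ℝ → ℝ≥0∞ := S2.indicator (fun v => ENNReal.ofReal ((1-|v.2-v.1|)^(2*n))) with hgdef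
  have hN : volume {v : ℝ × ℝ | |v.2 - v.1| = 1} = 0 := by
    refine measure_mono_null (fun v hv => ?_)
      (measure_union_null (line_measure_zero 1) (line_measure_zero (-1)))
    rcases (abs_eq (by norm_num : (0:ℝ) ≤ 1)).1 hv with h | h
    · exact Or.inl h
    · exact Or.inr h
  have hae : ∀ᵐ v : ℝ × ℝ, volume (Prod.mk v ⁻¹' susp n X) = g v * volume X := by
    filter_upwards [measure_eq_zero_iff_ae_notMem.1 hN] with v hv
    by_cases hvS : v ∈ S2
    · have hd : |v.2 - v.1| < 1 := lt_of_le_of_ne hvS.2.2 (fun h => hv h)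
      have ht : (0:ℝ) < 1 - |v.2 - v.1| := by linarith
      have hpre : Prod.mk v ⁻¹' susp n X = {x | gauge X x ≤ 1 - |v.2 - v.1|} := by
        ext x
        simp only [mem_preimage, susp, mem_setOf_eq, omega2, hexP_eq]
        have : (1:ℝ) * v.2 - 1 * v.1 = v.2 - v.1 := by ring
        rw [this]
        constructor
        · rintro ⟨-, h⟩; linarith
        · intro h; exact ⟨hvS, by linarith⟩
      rw [hpre, gauge_slice hconv hcomp h0 ht,
        Measure.addHaar_smul_of_nonneg volume ht.le,
        hgdef, indicator_of_mem hvS]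
      congr 2
      simp [Module.finrank_prod]
      ring
    · have hpre : Prod.mk v ⁻¹' susp n X = ∅ := by
        ext x
        simp only [mem_preimage, susp, mem_setOf_eq, mem_empty_iff_false, iff_false, not_and,
          hexP_eq]
        intro h
        exact absurd h hvS
      rw [hpre, hgdef, indicator_of_notMem hvS]
      simp
  rw [lintegral_congr_ae hae,
    lintegral_mul_const' _ _ hcomp.measure_lt_top.ne, lintegral_g]
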